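/- If P is odd, Q ≡ 1 (mod 4), and n is odd, then U_n(P,Q) ≡ U_n(1,1) (mod 4), where U_n(1,1) is the sequence with recurrence b_n = b_{n-1} − b_{n-2}, b_0 = 0, b_1 = 1. -/

import Mathlib

def lucasU (P Q : ℤ) : ℕ → ℤ
  | 0 => 0
  | 1 => 1
  | (n + 2) => P * lucasU P Q (n + 1) - Q * lucasU P Q n

lemma lucasU_key (P Q : ℤ) (hP : Odd P) (hQ4 : Q % 4 = 1) :
    ∀ n : ℕ, ((lucasU P Q n : ZMod 4)) = (P : ZMod 4) ^ (n + 1) * (lucasU 1 1 n : ZMod 4) := by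
  set e : ZMod 4 := (P : ZMod 4) with he
  have hQ : ((Q : ZMod 4)) = 1 := by
    have : Q % 4 = 1 % 4 := by omega
    have h := (ZMod.intCast_eq_intCast_iff' Q 1 4).2 (by simpa [Int.ModEq] using this)
    simpa using h
  have he2 : e ^ 2 = 1 := by
    obtain ⟨k, hk⟩ := hP
    rw [he, hk]
    push_cast
    ring_nf
    rw [show ((4 : ZMod 4)) = 0 from by decide]
    ring
  have main : ∀ n : ℕ,
      ((lucasU P Q n : ZMod 4)) = e ^ (n + 1) * (lucasU 1 1 n : ZMod 4) ∧
      ((lucasU P Q (n+1) : ZMod 4)) = e ^ (n + 2) * (lucasU 1 1 (n+1) : ZMod 4) := by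
    intro n
    induction n with
    | zero => simp [lucasU, he2]
    | succ m ih =>
      obtain ⟨ih1, ih2⟩ := ih
      refine ⟨ih2, ?_⟩
      show ((lucasU P Q (m+2) : ZMod 4)) = _
      rw [show lucasU P Q (m+2) = P * lucasU P Q (m+1) - Q * lucasU P Q m from rfl,
        show lucasU 1 1 (m+2) = 1 * lucasU 1 1 (m+1) - 1 * lucasU 1 1 m from rfl]
      push_cast
      rw [hQ, ih1, ih2, ← he]
      have hpow2 : e ^ (m + 1) = e ^ (m + 3) := by
        have : e ^ (m + 3) = e ^ (m+1) * e ^ 2 := by ring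
        rw [this, he2, mul_one]
      rw [hpow2]
      ring
  intro n
  exact (main n).1

theorem stmt10 (P Q : ℤ) (n : ℕ) (hP : Odd P) (hQ4 : Q % 4 = 1) (hn : Odd n) :
    lucasU P Q n ≡ lucasU 1 1 n [ZMOD 4] := by
  have h := lucasU_key P Q hP hQ4 n
  obtain ⟨m, hm⟩ := hn
  have hP2 : ((P : ZMod 4)) ^ (n + 1) = 1 := by
    have hsq : ((P : ZMod 4)) ^ 2 = 1 := by
      obtain ⟨k, hk⟩ := hP
      rw [hk]; push_cast; ring_nf
      rw [show ((4 : ZMod 4)) = 0 from by decide]; ring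
    rw [hm, show 2*m+1+1 = 2*(m+1) from by ring, pow_mul, hsq, one_pow]
  rw [hP2, one_mul] at h
  have := (ZMod.intCast_eq_intCast_iff' (lucasU P Q n) (lucasU 1 1 n) 4).1 h
  simpa [Int.ModEq] using this
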